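/- arXiv:2308.12506 — 2 statements merged into one kernel-verified Lean document; each statement's English description precedes it below -/
import Mathlib

section
/- If Y is a real-valued random variable such that E[Y f(Y)] = E[f'(Y)] for every continuously differentiable, bounded function f with bounded derivative, then Y has the standard normal distribution N(0,1). -/
open MeasureTheory ProbabilityTheory Real Set
open scoped ENNReal NNReal

lemma integrable_phi : Integrable (fun t : ℝ => Real.exp (-t^2/2)) := by
  have := integrable_exp_neg_mul_sq (b := (1:ℝ)/2) (by norm_num)
  convert this using 2 with t
  ring_nf

lemma integral_phi : ∫ t : ℝ, Real.exp (-t^2/2) = Real.sqrt (2*π) := by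
  have := integral_gaussian ((1:ℝ)/2)
  rw [show π / ((1:ℝ)/2) = 2*π by ring] at this
  rw [← this]
  congr 1 with t
  ring_nf

lemma gpdf01 (x : ℝ) : gaussianPDFReal 0 1 x = (Real.sqrt (2*π))⁻¹ * Real.exp (-x^2/2) := by
  simp [gaussianPDFReal]

lemma tail_le {x : ℝ} (hx : 0 ≤ x) :
    ∫ t in Ioi x, Real.exp (-t^2/2) ≤ Real.sqrt (2*π) * Real.exp (-x^2/2) := by
  have hint2 : Integrable (fun t : ℝ => Real.exp (-x^2/2) * Real.exp (-(t-x)^2/2)) :=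
    ((integrable_phi.comp_sub_right x)).const_mul _
  calc ∫ t in Ioi x, Real.exp (-t^2/2)
      ≤ ∫ t in Ioi x, Real.exp (-x^2/2) * Real.exp (-(t-x)^2/2) := by
        apply setIntegral_mono_on integrable_phi.integrableOn hint2.integrableOn
          measurableSet_Ioi
        intro t ht
        rw [← Real.exp_add]
        apply Real.exp_le_exp.2
        have := ht.out.le
        nlinarith
    _ ≤ ∫ t : ℝ, Real.exp (-x^2/2) * Real.exp (-(t-x)^2/2) := by
        apply setIntegral_le_integral hint2
        filter_upwards with t
        positivity
    _ = Real.exp (-x^2/2) * ∫ t : ℝ, Real.exp (-(t-x)^2/2) := integral_const_mul _ _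
    _ = Real.sqrt (2*π) * Real.exp (-x^2/2) := by
        rw [integral_sub_right_eq_self (μ := volume) (fun t => Real.exp (-t^2/2)) x, integral_phi]; ring

lemma integrable_mul_phi : Integrable (fun t : ℝ => t * Real.exp (-t^2/2)) := by
  have := integrable_rpow_mul_exp_neg_mul_sq (b := (1:ℝ)/2) (by norm_num) (s := 1) (by norm_num)
  simp only [Real.rpow_one] at this
  convert this using 2 with t
  ring_nf

lemma tail_id : ∀ x : ℝ, ∫ t in Ioi x, t * Real.exp (-t^2/2) = Real.exp (-x^2/2) := by
  intro x
  have h := integral_Ioi_of_hasDerivAt_of_tendsto' (a := x)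
    (f := fun t : ℝ => -Real.exp (-t^2/2)) (f' := fun t : ℝ => t * Real.exp (-t^2/2))
    ?_ integrable_mul_phi.integrableOn (m := 0) ?_
  · rw [h]; simp
  · intro t _
    have h1 : HasDerivAt (fun t : ℝ => -t^2/2) (-t) t := by
      simpa [neg_div, Pi.neg_def] using ((hasDerivAt_pow 2 t).div_const 2).neg
    have := (h1.exp).neg
    convert this using 1
    · ext s; simp
    · ring
  · have h2 : Filter.Tendsto (fun t : ℝ => -t^2/2) Filter.atTop Filter.atBot := by
      apply Filter.Tendsto.atBot_div_const (by norm_num)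
      apply Filter.tendsto_neg_atBot_iff.2
      exact Filter.tendsto_pow_atTop two_ne_zero
    have := (Real.tendsto_exp_atBot.comp h2).neg
    simpa using this

lemma tail_mul_le {x : ℝ} (hx : 0 ≤ x) :
    x * ∫ t in Ioi x, Real.exp (-t^2/2) ≤ Real.exp (-x^2/2) := by
  rw [← integral_const_mul]
  rw [← tail_id x]
  apply setIntegral_mono_on (integrable_phi.integrableOn.const_mul x)
    integrable_mul_phi.integrableOn measurableSet_Ioi
  intro t ht
  have h1 : x ≤ t := ht.out.le
  have : (0:ℝ) ≤ Real.exp (-t^2/2) := le_of_lt (Real.exp_pos _)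
  nlinarith

lemma integral_gaussReal (h : ℝ → ℝ) :
    ∫ x, h x ∂(gaussianReal 0 1) = (Real.sqrt (2*π))⁻¹ * ∫ t, h t * Real.exp (-t^2/2) := by
  rw [gaussianReal_of_var_ne_zero 0 one_ne_zero]
  have hmeas : Measurable (fun x => (gaussianPDFReal 0 1 x).toNNReal) :=
    (measurable_gaussianPDFReal 0 1).real_toNNReal
  have heq : volume.withDensity (gaussianPDF 0 1)
      = volume.withDensity (fun x => ((gaussianPDFReal 0 1 x).toNNReal : ℝ≥0∞)) := rfl
  rw [heq, integral_withDensity_eq_integral_smul hmeas]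
  rw [← integral_const_mul]
  congr 1 with x
  rw [NNReal.smul_def, smul_eq_mul, Real.coe_toNNReal _ (gaussianPDFReal_nonneg 0 1 x), gpdf01]
  ring

lemma stein_key {Ω : Type*} [MeasurableSpace Ω] (μ : Measure Ω) [IsProbabilityMeasure μ]
    (Y : Ω → ℝ) (hYmeas : Measurable Y) (hYint : Integrable Y μ)
    (hstein : ∀ f : ℝ → ℝ, ContDiff ℝ 1 f →
      (∃ Cf : ℝ, ∀ x, |f x| ≤ Cf) → (∃ Cf' : ℝ, ∀ x, |deriv f x| ≤ Cf') →
      ∫ ω, Y ω * f (Y ω) ∂μ = ∫ ω, deriv f (Y ω) ∂μ)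
    (h : ℝ → ℝ) (hc : Continuous h) (C : ℝ) (hbd : ∀ x, |h x| ≤ C) :
    ∫ ω, h (Y ω) ∂μ = ∫ x, h x ∂(gaussianReal 0 1) := by
  set m : ℝ := ∫ x, h x ∂(gaussianReal 0 1) with hm
  set C' : ℝ := C + |m| with hC'
  have hbd' : ∀ x, |h x - m| ≤ C' := fun x =>
    (abs_sub _ _).trans (add_le_add (hbd x) le_rfl)
  set g : ℝ → ℝ := fun t => (h t - m) * Real.exp (-t^2/2) with hg
  have hgcont : Continuous g := by
    apply (hc.sub continuous_const).mul
    exact (Real.continuous_exp.comp (by continuity))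
  have hgint : Integrable g := by
    apply integrable_phi.bdd_mul (c := C') (hc.sub continuous_const).aestronglyMeasurable
    exact Filter.Eventually.of_forall (fun x => by simpa [Real.norm_eq_abs] using hbd' x)
  -- the function h * phi is integrable
  have hhphi_int : Integrable (fun t => h t * Real.exp (-t^2/2)) := by
    apply integrable_phi.bdd_mul (c := C) hc.aestronglyMeasurable
    exact Filter.Eventually.of_forall (fun x => by simpa [Real.norm_eq_abs] using hbd x)
  have sqrt2pi_pos : (0:ℝ) < Real.sqrt (2*π) := Real.sqrt_pos.2 (by positivity)
  have hgzero : ∫ t, g t = 0 := by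
    have h1 : ∫ t, g t = (∫ t, h t * Real.exp (-t^2/2)) - m * Real.sqrt (2*π) := by
      simp_rw [hg, sub_mul]
      rw [integral_sub hhphi_int (integrable_phi.const_mul m), integral_const_mul, integral_phi]
    have h2 : (∫ t, h t * Real.exp (-t^2/2)) = m * Real.sqrt (2*π) := by
      rw [hm, integral_gaussReal]
      field_simp
    rw [h1, h2, sub_self]
  set F : ℝ → ℝ := fun x => ∫ t in Iic x, g t with hF
  have hFderiv : ∀ x, HasDerivAt F (g x) x := by
    intro x
    have hrw : F = fun x => (∫ t in Iic 0, g t) + ∫ t in (0:ℝ)..x, g t := by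
      funext y
      rw [← intervalIntegral.integral_Iic_sub_Iic hgint.integrableOn hgint.integrableOn]
      ring
    rw [hrw]
    apply HasDerivAt.const_add
    exact intervalIntegral.integral_hasDerivAt_right hgint.intervalIntegrable
      (hgcont.stronglyMeasurable.stronglyMeasurableAtFilter) hgcont.continuousAt
  set f : ℝ → ℝ := fun x => Real.exp (x^2/2) * F x with hf
  have hexp1 : ∀ x : ℝ, Real.exp (x^2/2) * Real.exp (-x^2/2) = 1 := by
    intro x; rw [← Real.exp_add, show x^2/2 + -x^2/2 = 0 by ring, Real.exp_zero]
  have hfderiv : ∀ x, HasDerivAt f (x * f x + (h x - m)) x := by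
    intro x
    have he : HasDerivAt (fun x : ℝ => Real.exp (x^2/2)) (x * Real.exp (x^2/2)) x := by
      have h1 : HasDerivAt (fun x : ℝ => x^2/2) x x := by
        simpa using (hasDerivAt_pow 2 x).div_const 2
      simpa [mul_comm] using h1.exp
    have h2 := he.mul (hFderiv x)
    refine h2.congr_deriv ?_
    symm
    simp only [hf, hg]
    have := hexp1 x
    linear_combination (m - h x) * this
  have hfdiff : Differentiable ℝ f := fun x => (hfderiv x).differentiableAt
  have hderiv_eq : deriv f = fun x => x * f x + (h x - m) :=
    funext fun x => (hfderiv x).deriv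
  have hfC1 : ContDiff ℝ 1 f := by
    rw [contDiff_one_iff_deriv]
    refine ⟨hfdiff, ?_⟩
    rw [hderiv_eq]
    exact (continuous_id.mul hfdiff.continuous).add (hc.sub continuous_const)
  -- bounds on F
  have hFle1 : ∀ x, |F x| ≤ C' * ∫ t in Iic x, Real.exp (-t^2/2) := by
    intro x
    calc |F x| ≤ ∫ t in Iic x, |g t| := by
          simpa [Real.norm_eq_abs] using
            norm_integral_le_integral_norm (μ := volume.restrict (Iic x)) g
      _ ≤ ∫ t in Iic x, C' * Real.exp (-t^2/2) := by
          apply setIntegral_mono_on hgint.abs.integrableOn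
            (integrable_phi.integrableOn.const_mul C') measurableSet_Iic
          intro t _
          rw [hg, abs_mul, abs_of_pos (Real.exp_pos _)]
          exact mul_le_mul_of_nonneg_right (hbd' t) (Real.exp_pos _).le
      _ = C' * ∫ t in Iic x, Real.exp (-t^2/2) := integral_const_mul _ _
  have hFle2 : ∀ x, |F x| ≤ C' * ∫ t in Ioi x, Real.exp (-t^2/2) := by
    intro x
    have hsplit : F x + ∫ t in Ioi x, g t = 0 := by
      rw [← hgzero, hF]
      exact intervalIntegral.integral_Iic_add_Ioi hgint.integrableOn hgint.integrableOn
    have : F x = -∫ t in Ioi x, g t := by linarith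
    rw [this, abs_neg]
    calc |∫ t in Ioi x, g t| ≤ ∫ t in Ioi x, |g t| := by
          simpa [Real.norm_eq_abs] using
            norm_integral_le_integral_norm (μ := volume.restrict (Ioi x)) g
      _ ≤ ∫ t in Ioi x, C' * Real.exp (-t^2/2) := by
          apply setIntegral_mono_on hgint.abs.integrableOn
            (integrable_phi.integrableOn.const_mul C') measurableSet_Ioi
          intro t _
          rw [hg, abs_mul, abs_of_pos (Real.exp_pos _)]
          exact mul_le_mul_of_nonneg_right (hbd' t) (Real.exp_pos _).le
      _ = C' * ∫ t in Ioi x, Real.exp (-t^2/2) := integral_const_mul _ _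
  have hC'nonneg : 0 ≤ C' := le_trans (abs_nonneg _) (hbd' 0)
  have hIic_eq : ∀ x : ℝ, ∫ t in Iic x, Real.exp (-t^2/2) = ∫ t in Ioi (-x), Real.exp (-t^2/2) := by
    intro x
    rw [← integral_comp_neg_Iic x (fun t => Real.exp (-t^2/2))]
    congr 1 with t
    rw [neg_pow]
    norm_num
  have hfbound : ∀ x, |f x| ≤ C' * Real.sqrt (2*π) := by
    intro x
    rcases le_or_gt 0 x with hx | hx
    · calc |f x| = Real.exp (x^2/2) * |F x| := by
            rw [hf, abs_mul, abs_of_pos (Real.exp_pos _)]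
        _ ≤ Real.exp (x^2/2) * (C' * (Real.sqrt (2*π) * Real.exp (-x^2/2))) := by
            apply mul_le_mul_of_nonneg_left _ (Real.exp_pos _).le
            exact le_trans (hFle2 x) (mul_le_mul_of_nonneg_left (tail_le hx) hC'nonneg)
        _ = C' * Real.sqrt (2*π) * (Real.exp (x^2/2) * Real.exp (-x^2/2)) := by ring
        _ = C' * Real.sqrt (2*π) := by rw [hexp1]; ring
    · have hx' : (0:ℝ) ≤ -x := by linarith
      calc |f x| = Real.exp (x^2/2) * |F x| := by
            rw [hf, abs_mul, abs_of_pos (Real.exp_pos _)]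
        _ ≤ Real.exp (x^2/2) * (C' * (Real.sqrt (2*π) * Real.exp (-(-x)^2/2))) := by
            apply mul_le_mul_of_nonneg_left _ (Real.exp_pos _).le
            refine le_trans (hFle1 x) ?_
            rw [hIic_eq]
            exact mul_le_mul_of_nonneg_left (tail_le hx') hC'nonneg
        _ = C' * Real.sqrt (2*π) * (Real.exp (x^2/2) * Real.exp (-x^2/2)) := by ring_nf
        _ = C' * Real.sqrt (2*π) := by rw [hexp1]; ring
  have hxfbound : ∀ x, |x * f x| ≤ C' := by
    intro x
    rcases le_or_gt 0 x with hx | hx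
    · calc |x * f x| = Real.exp (x^2/2) * (x * |F x|) := by
            rw [abs_mul, hf, abs_mul, abs_of_pos (Real.exp_pos _), abs_of_nonneg hx]; ring
        _ ≤ Real.exp (x^2/2) * (C' * Real.exp (-x^2/2)) := by
            apply mul_le_mul_of_nonneg_left _ (Real.exp_pos _).le
            calc x * |F x| ≤ x * (C' * ∫ t in Ioi x, Real.exp (-t^2/2)) :=
                  mul_le_mul_of_nonneg_left (hFle2 x) hx
              _ = C' * (x * ∫ t in Ioi x, Real.exp (-t^2/2)) := by ring
              _ ≤ C' * Real.exp (-x^2/2) := mul_le_mul_of_nonneg_left (tail_mul_le hx) hC'nonneg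
        _ = C' * (Real.exp (x^2/2) * Real.exp (-x^2/2)) := by ring
        _ = C' := by rw [hexp1]; ring
    · have hx' : (0:ℝ) ≤ -x := by linarith
      calc |x * f x| = Real.exp (x^2/2) * (-x * |F x|) := by
            rw [abs_mul, hf, abs_mul, abs_of_pos (Real.exp_pos _), abs_of_neg hx]; ring
        _ ≤ Real.exp (x^2/2) * (C' * Real.exp (-(-x)^2/2)) := by
            apply mul_le_mul_of_nonneg_left _ (Real.exp_pos _).le
            calc -x * |F x| ≤ -x * (C' * ∫ t in Ioi (-x), Real.exp (-t^2/2)) := by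
                  apply mul_le_mul_of_nonneg_left _ hx'
                  rw [← hIic_eq]
                  exact hFle1 x
              _ = C' * (-x * ∫ t in Ioi (-x), Real.exp (-t^2/2)) := by ring
              _ ≤ C' * Real.exp (-(-x)^2/2) := mul_le_mul_of_nonneg_left (tail_mul_le hx') hC'nonneg
        _ = C' * (Real.exp (x^2/2) * Real.exp (-x^2/2)) := by ring_nf
        _ = C' := by rw [hexp1]; ring
  have hderivbound : ∀ x, |deriv f x| ≤ C' + C' := by
    intro x
    rw [hderiv_eq]
    exact (abs_add_le _ _).trans (add_le_add (hxfbound x) (hbd' x))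
  -- apply the Stein identity
  have hstein' := hstein f hfC1 ⟨C' * Real.sqrt (2*π), hfbound⟩ ⟨C' + C', hderivbound⟩
  have hfYmeas : AEStronglyMeasurable (fun ω => f (Y ω)) μ :=
    (hfdiff.continuous.measurable.comp hYmeas).aestronglyMeasurable
  have int1 : Integrable (fun ω => Y ω * f (Y ω)) μ := by
    have := hYint.bdd_mul (c := C' * Real.sqrt (2*π)) hfYmeas
      (Filter.Eventually.of_forall (fun ω => by simpa [Real.norm_eq_abs] using hfbound (Y ω)))
    simpa [mul_comm] using this
  have int2 : Integrable (fun ω => h (Y ω)) μ := by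
    apply (integrable_const C).mono' ((hc.measurable.comp hYmeas).aestronglyMeasurable)
    filter_upwards with ω
    simpa [Real.norm_eq_abs] using hbd (Y ω)
  have hrhs : ∫ ω, deriv f (Y ω) ∂μ
      = (∫ ω, Y ω * f (Y ω) ∂μ) + ((∫ ω, h (Y ω) ∂μ) - m) := by
    have int3 : Integrable (fun ω => h (Y ω) - m) μ := int2.sub (integrable_const m)
    rw [hderiv_eq]
    simp only
    rw [integral_add int1 int3, integral_sub int2 (integrable_const m)]
    simp [measure_univ]
  rw [hrhs] at hstein'
  linarith [hstein']


/-- Stein's characterization (converse direction): if `E[Y f(Y)] = E[f'(Y)]` for every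
continuously differentiable bounded `f` with bounded derivative, then `Y ~ N(0,1)`. -/
theorem gaussian_of_stein_identity
    {Ω : Type*} [MeasurableSpace Ω] (μ : Measure Ω) [IsProbabilityMeasure μ]
    (Y : Ω → ℝ) (hYmeas : Measurable Y)
    (hYint : Integrable Y μ) (hY2 : MemLp Y 2 μ)
    (hstein : ∀ f : ℝ → ℝ, ContDiff ℝ 1 f →
      (∃ Cf : ℝ, ∀ x, |f x| ≤ Cf) → (∃ Cf' : ℝ, ∀ x, |deriv f x| ≤ Cf') →
      ∫ ω, Y ω * f (Y ω) ∂μ = ∫ ω, deriv f (Y ω) ∂μ) :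
    Measure.map Y μ = gaussianReal 0 1 := by
  have hprob : IsProbabilityMeasure (Measure.map Y μ) :=
    Measure.isProbabilityMeasure_map hYmeas.aemeasurable
  apply ext_of_forall_lintegral_eq_of_IsFiniteMeasure
  intro f
  have h1 : ∫⁻ x, f x ∂(Measure.map Y μ) ≠ ⊤ :=
    (BoundedContinuousFunction.lintegral_lt_top_of_nnreal _ f).ne
  have h2 : ∫⁻ x, f x ∂(gaussianReal 0 1) ≠ ⊤ :=
    (BoundedContinuousFunction.lintegral_lt_top_of_nnreal _ f).ne
  have hcont : Continuous (fun x : ℝ => (f x : ℝ)) := NNReal.continuous_coe.comp f.continuous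
  rw [← ENNReal.toReal_eq_toReal_iff' h1 h2,
    BoundedContinuousFunction.toReal_lintegral_coe_eq_integral,
    BoundedContinuousFunction.toReal_lintegral_coe_eq_integral,
    integral_map hYmeas.aemeasurable hcont.aestronglyMeasurable]
  apply stein_key μ Y hYmeas hYint hstein _ hcont ((nndist 0 f : ℝ≥0) : ℝ)
  intro x
  rw [abs_of_nonneg (f x).coe_nonneg]
  exact_mod_cast f.apply_le_nndist_zero x
end

section
/- Let α : ℕ → [0,1] be non-increasing with α(0) = 1 and α(m) → 0, and define α⁻¹(u) = max{m ≥ 0 : α(m) > u} for u ∈ (0,1). Then for any Borel function f : (0,1) → [0,∞) and any integer q ≥ 1: (i) Σ_{m=1}^∞ m^{q−1} ∫_0^{α(m)} f(u) du ≤ ∫_0^1 [α⁻¹(u)]^q f(u) du, and (ii) ∫_0^1 [α⁻¹(u)]^q du ≤ q Σ_{m=1}^∞ α(m) m^{q−1}. -/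
open MeasureTheory

lemma pow_succ_le_aux (N r : ℕ) : (N+1)^(r+1) ≤ N^(r+1) + (r+1)*(N+1)^r := by
  induction r with
  | zero => simp
  | succ r ih =>
    have h1 : N*(N+1)^r ≤ (N+1)^(r+1) := by
      rw [pow_succ, mul_comm ((N+1)^r) (N+1)]
      exact Nat.mul_le_mul_right _ (Nat.le_succ N)
    calc (N+1)^(r+1+1) = (N+1)^(r+1) + N*(N+1)^(r+1) := by ring
      _ ≤ (N+1)^(r+1) + N*(N^(r+1) + (r+1)*(N+1)^r) :=
          Nat.add_le_add_left (Nat.mul_le_mul_left _ ih) _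
      _ = (N+1)^(r+1) + N^(r+1+1) + (r+1)*(N*(N+1)^r) := by ring
      _ ≤ (N+1)^(r+1) + N^(r+1+1) + (r+1)*(N+1)^(r+1) :=
          Nat.add_le_add_left (Nat.mul_le_mul_left _ h1) _
      _ = N^(r+1+1) + (r+1+1)*(N+1)^(r+1) := by ring

lemma pow_le_sum_aux (N r : ℕ) :
    N^(r+1) ≤ ∑ m ∈ Finset.range N, (r+1)*(m+1)^r := by
  induction N with
  | zero => simp
  | succ N ih =>
    rw [Finset.sum_range_succ]
    calc (N+1)^(r+1) ≤ N^(r+1) + (r+1)*(N+1)^r := pow_succ_le_aux N r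
      _ ≤ (∑ m ∈ Finset.range N, (r+1)*(m+1)^r) + (r+1)*(N+1)^r :=
          Nat.add_le_add_right ih _

lemma sum_le_pow_aux (N r : ℕ) :
    ∑ m ∈ Finset.range N, (m+1)^r ≤ N^(r+1) := by
  calc ∑ m ∈ Finset.range N, (m+1)^r ≤ ∑ m ∈ Finset.range N, N^r :=
        Finset.sum_le_sum (fun m hm => Nat.pow_le_pow_left (Finset.mem_range.mp hm) r)
    _ = N * N^r := by simp [Finset.sum_const, mul_comm]
    _ = N^(r+1) := by rw [pow_succ]; ring

/-- Lemma B.1 on mixing coefficients: with `α⁻¹(u) = max{m : α(m) > u}`,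
(i) `Σ_{m≥1} m^{q-1} ∫_0^{α(m)} f ≤ ∫_0^1 (α⁻¹(u))^q f(u) du`, and
(ii) `∫_0^1 (α⁻¹(u))^q du ≤ q Σ_{m≥1} α(m) m^{q-1}`. -/
theorem mixing_inverse_integral_bounds
    (α : ℕ → ℝ) (hanti : Antitone α) (hα0 : α 0 = 1)
    (hnonneg : ∀ m, 0 ≤ α m) (hle : ∀ m, α m ≤ 1)
    (hlim : Filter.Tendsto α Filter.atTop (nhds 0))
    (αinv : ℝ → ℕ) (hαinv : ∀ u, αinv u = sSup {m : ℕ | u < α m})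
    (q : ℕ) (hq : 1 ≤ q)
    (f : ℝ → ENNReal) (hf : Measurable f) :
    (∑' m : ℕ, ((m + 1 : ℕ) : ENNReal) ^ (q - 1) *
        ∫⁻ u in Set.Ioo (0 : ℝ) (α (m + 1)), f u ≤
      ∫⁻ u in Set.Ioo (0 : ℝ) 1, ((αinv u : ENNReal)) ^ q * f u) ∧
    (∫⁻ u in Set.Ioo (0 : ℝ) 1, ((αinv u : ENNReal)) ^ q ≤
      (q : ENNReal) * ∑' m : ℕ, ENNReal.ofReal (α (m + 1)) * ((m + 1 : ℕ) : ENNReal) ^ (q - 1)) := by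
  obtain ⟨r, rfl⟩ : ∃ r, q = r + 1 := ⟨q - 1, (Nat.succ_pred_eq_of_pos hq).symm⟩
  have hq1 : r + 1 - 1 = r := rfl
  -- boundedness of the level sets
  have hbdd : ∀ u : ℝ, 0 < u → BddAbove {m : ℕ | u < α m} := by
    intro u hu
    have : ∀ᶠ m in Filter.atTop, α m < u := hlim.eventually_lt_const hu
    obtain ⟨M, hM⟩ := Filter.eventually_atTop.mp this
    refine ⟨M, fun m hm => ?_⟩
    by_contra h
    exact absurd (hM m (le_of_not_ge h)) (not_lt.mpr (le_of_lt hm))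
  -- key equivalence
  have key : ∀ u ∈ Set.Ioo (0:ℝ) 1, ∀ k, (u < α k ↔ k ≤ αinv u) := by
    intro u hu k
    rw [hαinv]
    constructor
    · exact fun h => le_csSup (hbdd u hu.1) h
    · intro h
      have hne : {m : ℕ | u < α m}.Nonempty := ⟨0, by simpa [hα0] using hu.2⟩
      have hmem : sSup {m : ℕ | u < α m} ∈ {m : ℕ | u < α m} :=
        Nat.sSup_mem hne (hbdd u hu.1)
      exact lt_of_lt_of_le hmem (hanti h)
  have hmemIoo : ∀ u ∈ Set.Ioo (0:ℝ) 1, ∀ m : ℕ,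
      (u ∈ Set.Ioo (0:ℝ) (α (m+1))) ↔ m < αinv u := by
    intro u hu m
    rw [Set.mem_Ioo, Nat.lt_iff_add_one_le, ← key u hu (m+1)]
    exact and_iff_right hu.1
  have hsub : ∀ m : ℕ, Set.Ioo (0:ℝ) (α (m+1)) ⊆ Set.Ioo 0 1 :=
    fun m u hu => ⟨hu.1, hu.2.trans_le (hle _)⟩
  constructor
  · -- part (i)
    have hrw : ∀ m : ℕ, ((m + 1 : ℕ) : ENNReal) ^ (r + 1 - 1) *
        ∫⁻ u in Set.Ioo (0 : ℝ) (α (m + 1)), f u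
        = ∫⁻ u in Set.Ioo (0:ℝ) 1,
            ((m + 1 : ℕ) : ENNReal) ^ r * (Set.Ioo (0:ℝ) (α (m+1))).indicator f u := by
      intro m
      rw [lintegral_const_mul _ (hf.indicator measurableSet_Ioo),
        lintegral_indicator measurableSet_Ioo, Measure.restrict_restrict measurableSet_Ioo,
        Set.inter_eq_self_of_subset_left (hsub m), hq1]
    calc ∑' m : ℕ, ((m + 1 : ℕ) : ENNReal) ^ (r + 1 - 1) *
          ∫⁻ u in Set.Ioo (0 : ℝ) (α (m + 1)), f u
        = ∑' m : ℕ, ∫⁻ u in Set.Ioo (0:ℝ) 1,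
            ((m + 1 : ℕ) : ENNReal) ^ r * (Set.Ioo (0:ℝ) (α (m+1))).indicator f u :=
          tsum_congr hrw
      _ = ∫⁻ u in Set.Ioo (0:ℝ) 1, ∑' m : ℕ,
            ((m + 1 : ℕ) : ENNReal) ^ r * (Set.Ioo (0:ℝ) (α (m+1))).indicator f u :=
          (lintegral_tsum (fun m =>
            ((measurable_const.mul (hf.indicator measurableSet_Ioo)).aemeasurable))).symm
      _ ≤ ∫⁻ u in Set.Ioo (0:ℝ) 1, ((αinv u : ENNReal)) ^ (r+1) * f u := by
          refine lintegral_mono_ae ?_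
          filter_upwards [ae_restrict_mem measurableSet_Ioo] with u hu
          have hzero : ∀ m ∉ Finset.range (αinv u),
              ((m + 1 : ℕ) : ENNReal) ^ r * (Set.Ioo (0:ℝ) (α (m+1))).indicator f u = 0 := by
            intro m hm
            rw [Set.indicator_of_notMem, mul_zero]
            rw [hmemIoo u hu m]
            exact Finset.mem_range.not.mp hm
          rw [tsum_eq_sum hzero]
          calc ∑ m ∈ Finset.range (αinv u),
                ((m + 1 : ℕ) : ENNReal) ^ r * (Set.Ioo (0:ℝ) (α (m+1))).indicator f u
              = ∑ m ∈ Finset.range (αinv u), ((m + 1 : ℕ) : ENNReal) ^ r * f u := by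
                refine Finset.sum_congr rfl (fun m hm => ?_)
                rw [Set.indicator_of_mem ((hmemIoo u hu m).mpr (Finset.mem_range.mp hm))]
            _ = (((∑ m ∈ Finset.range (αinv u), (m+1)^r : ℕ)) : ENNReal) * f u := by
                rw [← Finset.sum_mul]
                push_cast
                rfl
            _ ≤ ((αinv u : ENNReal)) ^ (r+1) * f u := by
                refine mul_le_mul_left ?_ _
                rw [show ((αinv u : ENNReal)) ^ (r+1) = (((αinv u)^(r+1) : ℕ) : ENNReal) by push_cast; rfl]
                exact Nat.cast_le.mpr (sum_le_pow_aux (αinv u) r)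
  · -- part (ii)
    set g : ℕ → ℝ → ENNReal := fun m =>
      (Set.Ioo (0:ℝ) (α (m+1))).indicator
        (fun _ => ((r+1 : ℕ) : ENNReal) * ((m + 1 : ℕ) : ENNReal) ^ r) with hg
    calc ∫⁻ u in Set.Ioo (0:ℝ) 1, ((αinv u : ENNReal)) ^ (r+1)
        ≤ ∫⁻ u in Set.Ioo (0:ℝ) 1, ∑' m : ℕ, g m u := by
          refine lintegral_mono_ae ?_
          filter_upwards [ae_restrict_mem measurableSet_Ioo] with u hu
          have hzero : ∀ m ∉ Finset.range (αinv u), g m u = 0 := by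
            intro m hm
            rw [hg]
            simp only
            rw [Set.indicator_of_notMem]
            rw [hmemIoo u hu m]
            exact Finset.mem_range.not.mp hm
          rw [tsum_eq_sum hzero]
          calc ((αinv u : ENNReal)) ^ (r+1)
              = (((αinv u)^(r+1) : ℕ) : ENNReal) := by push_cast; rfl
            _ ≤ (((∑ m ∈ Finset.range (αinv u), (r+1)*(m+1)^r : ℕ)) : ENNReal) :=
                Nat.cast_le.mpr (pow_le_sum_aux (αinv u) r)
            _ = ∑ m ∈ Finset.range (αinv u), g m u := by
                rw [Nat.cast_sum]
                refine Finset.sum_congr rfl (fun m hm => ?_)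
                rw [hg]
                simp only
                rw [Set.indicator_of_mem ((hmemIoo u hu m).mpr (Finset.mem_range.mp hm))]
                push_cast
                rfl
      _ = ∑' m : ℕ, ∫⁻ u in Set.Ioo (0:ℝ) 1, g m u :=
          lintegral_tsum (fun m => (measurable_const.indicator measurableSet_Ioo).aemeasurable)
      _ = ∑' m : ℕ, ((r+1 : ℕ) : ENNReal) * ((m + 1 : ℕ) : ENNReal) ^ r
            * ENNReal.ofReal (α (m+1)) := by
          refine tsum_congr (fun m => ?_)
          rw [hg]
          simp only
          rw [lintegral_indicator_const measurableSet_Ioo,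
            Measure.restrict_apply measurableSet_Ioo,
            Set.inter_eq_self_of_subset_left (hsub m), Real.volume_Ioo, sub_zero]
      _ = ((r+1 : ℕ) : ENNReal) * ∑' m : ℕ,
            ENNReal.ofReal (α (m + 1)) * ((m + 1 : ℕ) : ENNReal) ^ (r + 1 - 1) := by
          rw [← ENNReal.tsum_mul_left]
          exact tsum_congr (fun m => by rw [hq1]; ring
)
end
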